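/- arXiv:math/0208149 — 2 statements merged into one kernel-verified Lean document; each statement's English description precedes it below -/
import Mathlib

section
/- Let K and K' be simplicial complexes (geometric simplicial complexes in real vector spaces) with polyhedra |K| and |K'|, let L and L' be topological spaces, and let h : |K| → |K'|, g : L → L', α : L → |K|, α' : L' → |K'| be continuous maps such that h, g, α, α' combinatorially commute and h is combinatorial. Then for every point x ∈ |K| one has g(α⁻¹(st(x))) ⊆ α'⁻¹(st(h(x))), where st denotes the star in K and in K' respectively. -/
open Set

/-- The star `st(x)` of a point `x` in (the polyhedron of) a simplicial complex `K`:
the union of all closed simplexes of `K` containing `x`. -/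
def SimplicialStar {𝕜 E : Type*} [Ring 𝕜] [PartialOrder 𝕜] [IsOrderedRing 𝕜] [AddCommGroup E] [Module 𝕜 E]
    (K : Geometry.SimplicialComplex 𝕜 E) (x : E) : Set E :=
  ⋃ σ ∈ {σ ∈ K.faces | x ∈ convexHull 𝕜 (σ : Set E)}, convexHull 𝕜 (σ : Set E)

/-- A map `h : |K| → |K'|` between the polyhedra of simplicial complexes is
combinatorial if the preimage of every closed simplex of `K'` is a union of
closed simplexes of `K`. -/
def IsCombinatorialMap {E F : Type*} [AddCommGroup E] [Module ℝ E]
    [AddCommGroup F] [Module ℝ F]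
    (K : Geometry.SimplicialComplex ℝ E) (K' : Geometry.SimplicialComplex ℝ F)
    (h : K.space → K'.space) : Prop :=
  ∀ Δ' ∈ K'.faces, ∃ S ⊆ K.faces,
    {x : E | ∃ hx : x ∈ K.space, ((h ⟨x, hx⟩ : F) ∈ convexHull ℝ (Δ' : Set F))} =
      ⋃ σ ∈ S, convexHull ℝ (σ : Set E)

/-- Maps `h : |K| → |K'|`, `g : L → L'`, `α : L → |K|`, `α' : L' → |K'|`
combinatorially commute if for every face `Δ` of `K'` we have
`(α' ∘ g)((h ∘ α)⁻¹(conv Δ)) ⊆ conv Δ`. -/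
def CombinatoriallyCommute {E F L L' : Type*} [AddCommGroup E] [Module ℝ E]
    [AddCommGroup F] [Module ℝ F]
    (K : Geometry.SimplicialComplex ℝ E) (K' : Geometry.SimplicialComplex ℝ F)
    (h : K.space → K'.space) (g : L → L') (α : L → K.space) (α' : L' → K'.space) : Prop :=
  ∀ Δ ∈ K'.faces, ∀ z : L,
    ((h (α z) : F) ∈ convexHull ℝ (Δ : Set F)) → ((α' (g z) : F) ∈ convexHull ℝ (Δ : Set F))

lemma weights_eq_on {E : Type*} [AddCommGroup E] [Module ℝ E]
    {σ : Finset E} (hind : AffineIndependent ℝ ((↑) : σ → E))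
    {u v : E → ℝ} (hu : ∑ i ∈ σ, u i = 1) (hv : ∑ i ∈ σ, v i = 1)
    (heq : ∑ i ∈ σ, u i • i = ∑ i ∈ σ, v i • i) :
    ∀ i ∈ σ, u i = v i := by
  classical
  have hu' : ∑ i : σ, u i = 1 := by rw [Finset.sum_coe_sort]; exact hu
  have hv' : ∑ i : σ, v i = 1 := by rw [Finset.sum_coe_sort]; exact hv
  have hcombu : (Finset.univ.affineCombination ℝ ((↑) : σ → E) (fun i => u i))
      = ∑ i ∈ σ, u i • i := by
    rw [affineCombination_eq_centerMass hu', Finset.centerMass_eq_of_sum_1 _ _ hu',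
      ← Finset.sum_coe_sort σ (fun i => u i • i)]
  have hcombv : (Finset.univ.affineCombination ℝ ((↑) : σ → E) (fun i => v i))
      = ∑ i ∈ σ, v i • i := by
    rw [affineCombination_eq_centerMass hv', Finset.centerMass_eq_of_sum_1 _ _ hv',
      ← Finset.sum_coe_sort σ (fun i => v i • i)]
  have hind' := hind.indicator_eq_of_affineCombination_eq Finset.univ Finset.univ
    (fun i => u i) (fun i => v i) hu' hv' (by rw [hcombu, hcombv, heq])
  intro i hi
  have := congrFun hind' ⟨i, hi⟩
  simpa using this

/-- Proposition 2.3(iii), first inclusion: if `h, g, α, α'` combinatorially commute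
and `h` is combinatorial, then `g(α⁻¹(st(x))) ⊆ α'⁻¹(st(h(x)))` for every `x ∈ |K|`. -/
theorem image_preimage_star_subset {E F L L' : Type*}
    [AddCommGroup E] [Module ℝ E] [TopologicalSpace E]
    [AddCommGroup F] [Module ℝ F] [TopologicalSpace F]
    [TopologicalSpace L] [TopologicalSpace L']
    (K : Geometry.SimplicialComplex ℝ E) (K' : Geometry.SimplicialComplex ℝ F)
    (h : K.space → K'.space) (g : L → L') (α : L → K.space) (α' : L' → K'.space)
    (hh : Continuous h) (hg : Continuous g) (hα : Continuous α) (hα' : Continuous α')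
    (hcomm : CombinatoriallyCommute K K' h g α α')
    (hcomb : IsCombinatorialMap K K' h) :
    ∀ x : K.space, ∀ z : L,
      (α z : E) ∈ SimplicialStar K (x : E) →
        (α' (g z) : F) ∈ SimplicialStar K' (h x : F) := by
  classical
  intro x z hz
  simp only [SimplicialStar, Set.mem_iUnion, Set.mem_setOf_eq, exists_prop] at hz ⊢
  obtain ⟨σ, ⟨hσ, hxσ⟩, hyσ⟩ := hz
  obtain ⟨f, hf0, hf1, hfx⟩ := Finset.mem_convexHull'.1 hxσ
  obtain ⟨gw, hg0, hg1, hgy⟩ := Finset.mem_convexHull'.1 hyσ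
  set u : E → ℝ := fun i => (f i + gw i) / 2 with hu_def
  set τ : Finset E := σ.filter (fun i => 0 < u i) with hτ_def
  have hτσ : τ ⊆ σ := Finset.filter_subset _ _
  have hu0 : ∀ i ∈ σ, 0 ≤ u i := fun i hi =>
    div_nonneg (add_nonneg (hf0 i hi) (hg0 i hi)) (by norm_num)
  have husum : ∑ i ∈ σ, u i = 1 := by
    have : ∑ i ∈ σ, u i = (∑ i ∈ σ, f i + ∑ i ∈ σ, gw i) / 2 := by
      rw [← Finset.sum_add_distrib, ← Finset.sum_div]
    rw [this, hf1, hg1]; norm_num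
  have huzero : ∀ i ∈ σ, i ∉ τ → u i = 0 := by
    intro i hi hiτ
    have : ¬ 0 < u i := fun hpos => hiτ (Finset.mem_filter.2 ⟨hi, hpos⟩)
    linarith [hu0 i hi, this]
  -- membership in conv τ for weights vanishing off τ
  have key : ∀ c : E → ℝ, (∀ i ∈ σ, 0 ≤ c i) → (∀ i ∈ σ, i ∉ τ → c i = 0) →
      ∑ i ∈ σ, c i = 1 → (∑ i ∈ σ, c i • i) ∈ convexHull ℝ (τ : Set E) := by
    intro c hc0 hcz hc1
    rw [Finset.mem_convexHull']
    refine ⟨c, fun i hi => hc0 i (hτσ hi), ?_, ?_⟩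
    · rw [Finset.sum_subset hτσ hcz]; exact hc1
    · rw [Finset.sum_subset hτσ (fun i hi hin => by rw [hcz i hi hin, zero_smul])]
  have hfz : ∀ i ∈ σ, i ∉ τ → f i = 0 := by
    intro i hi hiτ
    have h1 := huzero i hi hiτ
    have h2 := hf0 i hi; have h3 := hg0 i hi
    simp only [hu_def] at h1
    linarith [(div_eq_zero_iff.1 h1).resolve_right (by norm_num : (2:ℝ) ≠ 0)]
  have hgz : ∀ i ∈ σ, i ∉ τ → gw i = 0 := by
    intro i hi hiτ
    have h1 := huzero i hi hiτ
    have h2 := hf0 i hi; have h3 := hg0 i hi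
    simp only [hu_def] at h1
    linarith [(div_eq_zero_iff.1 h1).resolve_right (by norm_num : (2:ℝ) ≠ 0)]
  set w : E := ∑ i ∈ σ, u i • i with hw_def
  have hwτ : w ∈ convexHull ℝ (τ : Set E) := key u hu0 huzero husum
  have hxτ : (x : E) ∈ convexHull ℝ (τ : Set E) := by rw [← hfx]; exact key f hf0 hfz hf1
  have hyτ : (α z : E) ∈ convexHull ℝ (τ : Set E) := by rw [← hgy]; exact key gw hg0 hgz hg1
  have hτne : τ ≠ ∅ := by
    intro hτe
    have : ∑ i ∈ σ, u i = 0 := by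
      rw [← Finset.sum_subset hτσ huzero, hτe, Finset.sum_empty]
    rw [husum] at this; norm_num at this
  have hτ : τ ∈ K.faces := K.down_closed hσ hτσ (Finset.nonempty_iff_ne_empty.2 hτne)
  have hw_space : w ∈ K.space := K.convexHull_subset_space hτ hwτ
  -- pick a face Δ of K' containing h w
  obtain ⟨Δ, hΔ, hhwΔ⟩ := Geometry.SimplicialComplex.mem_space_iff.1 (h ⟨w, hw_space⟩).2
  obtain ⟨S, hS, hSeq⟩ := hcomb Δ hΔ
  have hwmem : w ∈ {x : E | ∃ hx : x ∈ K.space, ((h ⟨x, hx⟩ : F) ∈ convexHull ℝ (Δ : Set F))} :=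
    ⟨hw_space, hhwΔ⟩
  rw [hSeq] at hwmem
  obtain ⟨ρ, hρS, hwρ⟩ := Set.mem_iUnion₂.1 hwmem
  have hρ : ρ ∈ K.faces := hS hρS
  -- w ∈ conv (τ ∩ ρ)
  have hwint : w ∈ convexHull ℝ ((τ ∩ ρ : Finset E) : Set E) := by
    have := K.inter_subset_convexHull hτ hρ ⟨hwτ, hwρ⟩
    simpa using this
  obtain ⟨v, hv0, hv1, hvw⟩ := Finset.mem_convexHull'.1 hwint
  set v' : E → ℝ := fun i => if i ∈ τ ∩ ρ then v i else 0 with hv'_def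
  have hτρσ : (τ ∩ ρ : Finset E) ⊆ σ := (Finset.inter_subset_left).trans hτσ
  have hv'zero : ∀ i ∈ σ, i ∉ (τ ∩ ρ : Finset E) → v' i = 0 := fun i _ hin => if_neg hin
  have hv'sum : ∑ i ∈ σ, v' i = 1 := by
    rw [← Finset.sum_subset hτρσ hv'zero]
    rw [Finset.sum_congr rfl (fun i hi => if_pos hi)]
    exact hv1
  have hv'w : ∑ i ∈ σ, v' i • i = w := by
    rw [← Finset.sum_subset hτρσ (fun i hi hin => by rw [hv'zero i hi hin, zero_smul])]
    calc ∑ i ∈ τ ∩ ρ, v' i • i = ∑ i ∈ τ ∩ ρ, v i • i :=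
          Finset.sum_congr rfl (fun i hi => by simp only [hv'_def]; rw [if_pos hi])
      _ = w := hvw
  have heqw : ∀ i ∈ σ, u i = v' i :=
    weights_eq_on (K.indep hσ) husum hv'sum (by rw [hv'w])
  -- τ ⊆ ρ
  have hτρ : τ ⊆ ρ := by
    intro i hiτ
    have hiσ : i ∈ σ := hτσ hiτ
    have hpos : 0 < u i := (Finset.mem_filter.1 hiτ).2
    by_contra hiρ
    have : v' i = 0 := if_neg (fun hmem => hiρ (Finset.mem_inter.1 hmem).2)
    rw [heqw i hiσ] at hpos
    rw [this] at hpos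
    exact lt_irrefl _ hpos
  have hconvτρ : convexHull ℝ (τ : Set E) ⊆ convexHull ℝ (ρ : Set E) :=
    convexHull_mono (Finset.coe_subset.2 hτρ)
  -- transfer x and α z to conv Δ
  have hmemΔ : ∀ p : K.space, (p : E) ∈ convexHull ℝ (τ : Set E) →
      (h p : F) ∈ convexHull ℝ (Δ : Set F) := by
    intro p hp
    have : (p : E) ∈ ⋃ s ∈ S, convexHull ℝ (s : Set E) :=
      Set.mem_iUnion₂.2 ⟨ρ, hρS, hconvτρ hp⟩
    rw [← hSeq] at this
    obtain ⟨hp', hhp⟩ := this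
    have heta : (⟨(p : E), hp'⟩ : K.space) = p := rfl
    rwa [heta] at hhp
  have hhxΔ : (h x : F) ∈ convexHull ℝ (Δ : Set F) := hmemΔ x hxτ
  have hhyΔ : (h (α z) : F) ∈ convexHull ℝ (Δ : Set F) := hmemΔ (α z) hyτ
  exact ⟨Δ, ⟨hΔ, hhxΔ⟩, hcomm Δ hΔ z hhyΔ⟩
end

section
/- Let K and K' be simplicial complexes (geometric simplicial complexes in real vector spaces) with polyhedra |K| and |K'|, let L and L' be topological spaces, and let h : |K| → |K'|, g : L → L', α : L → |K|, α' : L' → |K'| be continuous maps such that h, g, α, α' combinatorially commute and h is combinatorial. Then for every point z ∈ L one has h(st(α(z))) ⊆ st(α'(g(z))), where st denotes the star in K and in K' respectively. -/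
open Set

open Finset in
lemma subset_of_centroid_mem_convexHull {E : Type*} [AddCommGroup E] [Module ℝ E]
    {σ s : Finset E} (hσ : AffineIndependent ℝ ((↑) : σ → E)) (hne : σ.Nonempty)
    (hs : s ⊆ σ) (hmem : σ.centroid ℝ id ∈ convexHull ℝ (s : Set E)) : σ ⊆ s := by
  classical
  rw [Finset.convexHull_eq] at hmem
  obtain ⟨w, hw0, hw1, hwc⟩ := hmem
  haveI : Nonempty σ := ⟨⟨hne.choose, hne.choose_spec⟩⟩
  set e : σ ↪ E := ⟨(↑), Subtype.coe_injective⟩ with he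
  set s₂ : Finset σ := Finset.univ.filter (fun i => (i : E) ∈ s) with hs₂
  have hmap : s₂.map e = s := by
    ext x
    simp only [hs₂, mem_map, mem_filter, mem_univ, true_and, he,
      Function.Embedding.coeFn_mk]
    constructor
    · rintro ⟨i, hi, rfl⟩; exact hi.2
    · intro hx; exact ⟨⟨x, hs hx⟩, ⟨Finset.mem_univ _, hx⟩, rfl⟩
  have hsum2 : ∑ i ∈ s₂, (w ∘ e) i = 1 := by
    rw [show (∑ i ∈ s₂, (w ∘ e) i) = ∑ x ∈ s₂.map e, w x from (Finset.sum_map s₂ e w).symm,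
      hmap]
    exact hw1
  have hcomb2 : s₂.affineCombination ℝ ((↑) : σ → E) (w ∘ e) = σ.centroid ℝ id := by
    have h1 := Finset.affineCombination_map (s₂ := s₂) e w (id : E → E)
    rw [hmap] at h1
    have h2 : s.affineCombination ℝ (id : E → E) w = σ.centroid ℝ id := by
      rw [affineCombination_eq_centerMass hw1, hwc]
    rw [← h2, h1]
    rfl
  have hsum1 : ∑ i ∈ (Finset.univ : Finset σ), Finset.univ.centroidWeights ℝ i = 1 :=
    Finset.sum_centroidWeights_eq_one_of_nonempty ℝ _ Finset.univ_nonempty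
  have hcomb1 : (Finset.univ : Finset σ).affineCombination ℝ ((↑) : σ → E)
      (Finset.univ.centroidWeights ℝ) = σ.centroid ℝ id := by
    rw [← Finset.centroid_def, Finset.centroid_univ]
  have key := hσ.indicator_eq_of_affineCombination_eq Finset.univ s₂
    (Finset.univ.centroidWeights ℝ) (w ∘ e) hsum1 hsum2 (by rw [hcomb1, hcomb2])
  intro x hx
  have hkey := congrFun key ⟨x, hx⟩
  rw [Finset.coe_univ, Set.indicator_univ, Finset.centroidWeights_apply] at hkey
  have hcard : ((#(Finset.univ : Finset σ) : ℝ))⁻¹ ≠ 0 := by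
    simp [Finset.card_univ, Fintype.card_coe, hne.card_pos.ne']
  have hmem2 : (⟨x, hx⟩ : σ) ∈ s₂ := by
    by_contra hcon
    rw [Set.indicator_of_notMem (by simpa using hcon)] at hkey
    exact hcard hkey
  simpa [hs₂] using hmem2

/-- Proposition 2.3(iii), second inclusion: if `h, g, α, α'` combinatorially commute
and `h` is combinatorial, then `h(st(α(z))) ⊆ st(α'(g(z)))` for every `z ∈ L`. -/
theorem image_star_subset_star {E F L L' : Type*}
    [AddCommGroup E] [Module ℝ E] [TopologicalSpace E]
    [AddCommGroup F] [Module ℝ F] [TopologicalSpace F]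
    [TopologicalSpace L] [TopologicalSpace L']
    (K : Geometry.SimplicialComplex ℝ E) (K' : Geometry.SimplicialComplex ℝ F)
    (h : K.space → K'.space) (g : L → L') (α : L → K.space) (α' : L' → K'.space)
    (hh : Continuous h) (hg : Continuous g) (hα : Continuous α) (hα' : Continuous α')
    (hcomm : CombinatoriallyCommute K K' h g α α')
    (hcomb : IsCombinatorialMap K K' h) :
    ∀ z : L, ∀ y : K.space,
      (y : E) ∈ SimplicialStar K (α z : E) →
        (h y : F) ∈ SimplicialStar K' (α' (g z) : F) := by
  classical
  intro z y hy
  simp only [SimplicialStar, Set.mem_iUnion, Set.mem_sep_iff, exists_prop] at hy ⊢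
  obtain ⟨σ, ⟨hσK, hαz⟩, hyσ⟩ := hy
  have hne : σ.Nonempty :=
    Finset.nonempty_iff_ne_empty.2 (fun hn => K.empty_notMem (hn ▸ hσK))
  set b : E := σ.centroid ℝ id with hb
  have hbσ : b ∈ convexHull ℝ (σ : Set E) := Finset.centroid_mem_convexHull σ hne
  have hbK : b ∈ K.space := K.convexHull_subset_space hσK hbσ
  obtain ⟨Δ, hΔ, hbΔ⟩ := Geometry.SimplicialComplex.mem_space_iff.1 (h ⟨b, hbK⟩).2
  obtain ⟨S, hS, hset⟩ := hcomb Δ hΔ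
  have hbL : b ∈ {x : E | ∃ hx : x ∈ K.space,
      ((h ⟨x, hx⟩ : F) ∈ convexHull ℝ (Δ : Set F))} := ⟨hbK, hbΔ⟩
  rw [hset] at hbL
  obtain ⟨τ, hτS, hbτ⟩ := Set.mem_iUnion₂.1 hbL
  have hτK := hS hτS
  have hbστ : b ∈ convexHull ℝ ((σ ∩ τ : Finset E) : Set E) := by
    rw [Finset.coe_inter]
    exact K.inter_subset_convexHull hσK hτK ⟨hbσ, hbτ⟩
  have hsub : σ ⊆ τ :=
    fun x hx => Finset.mem_of_mem_inter_right
      (subset_of_centroid_mem_convexHull (K.indep hσK) hne Finset.inter_subset_left hbστ hx)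
  have hστ : convexHull ℝ (σ : Set E) ⊆ convexHull ℝ (τ : Set E) :=
    convexHull_mono (Finset.coe_subset.2 hsub)
  have hyL : (y : E) ∈ {x : E | ∃ hx : x ∈ K.space,
      ((h ⟨x, hx⟩ : F) ∈ convexHull ℝ (Δ : Set F))} := by
    rw [hset]; exact Set.mem_iUnion₂.2 ⟨τ, hτS, hστ hyσ⟩
  obtain ⟨hy', hhy⟩ := hyL
  have hyy : (⟨(y : E), hy'⟩ : K.space) = y := Subtype.ext rfl
  rw [hyy] at hhy
  have hαL : ((α z : E)) ∈ {x : E | ∃ hx : x ∈ K.space,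
      ((h ⟨x, hx⟩ : F) ∈ convexHull ℝ (Δ : Set F))} := by
    rw [hset]; exact Set.mem_iUnion₂.2 ⟨τ, hτS, hστ hαz⟩
  obtain ⟨hα1, hhα⟩ := hαL
  have hαα : (⟨(α z : E), hα1⟩ : K.space) = α z := Subtype.ext rfl
  rw [hαα] at hhα
  exact ⟨Δ, ⟨hΔ, hcomm Δ hΔ z hhα⟩, hhy⟩
end
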